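/- arXiv:1101.2570 — 4 statements merged into one kernel-verified Lean document; each statement's English description precedes it below -/
import Mathlib

section
/- As n → ∞, E[I_n²·log I_n] = E[V²]·n²·log n + E[V²·log V]·n² + o(n²). -/
open MeasureTheory Filter Topology Asymptotics

open Finset in
-- Bernstein basis evaluated
lemma sum_bern (η : ℕ) (x : ℝ) :
    ∑ k ∈ Finset.range (η+1), (η.choose k : ℝ) * x^k * (1-x)^(η-k) = 1 := by
  have h := congrArg (Polynomial.eval x) (bernsteinPolynomial.sum ℝ η)
  simpa [bernsteinPolynomial, Polynomial.eval_finset_sum] using h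

lemma var_bern (η : ℕ) (x : ℝ) :
    ∑ k ∈ Finset.range (η+1),
      ((η:ℝ)*x - k)^2 * ((η.choose k : ℝ) * x^k * (1-x)^(η-k))
      = (η:ℝ) * x * (1-x) := by
  have h := congrArg (Polynomial.eval x) (bernsteinPolynomial.variance ℝ η)
  simpa [bernsteinPolynomial, Polynomial.eval_finset_sum] using h

-- |x log x| ≤ 1 on [0,1]
lemma xlogx_le (x : ℝ) (h0 : 0 ≤ x) (h1 : x ≤ 1) : |x * Real.log x| ≤ 1 := by
  rcases eq_or_lt_of_le h0 with h | h
  · simp [← h]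
  · simpa [mul_comm] using (Real.abs_log_mul_self_lt x h h1).le

lemma lip_sq {a x : ℝ} (ha : a ∈ Set.Icc (0:ℝ) 1) (hx : x ∈ Set.Icc (0:ℝ) 1) :
    |a^2 - x^2| ≤ 2 * |a - x| := by
  rw [show a^2 - x^2 = (a+x)*(a-x) by ring, abs_mul]
  have : |a + x| ≤ 2 := by
    rw [abs_le]; constructor <;> nlinarith [ha.1, ha.2, hx.1, hx.2]
  exact mul_le_mul_of_nonneg_right this (abs_nonneg _)

-- Lipschitz bound for x^2 log x on [0,1]
lemma lip_xxlog {a x : ℝ} (ha : a ∈ Set.Icc (0:ℝ) 1) (hx : x ∈ Set.Icc (0:ℝ) 1) :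
    |a^2 * Real.log a - x^2 * Real.log x| ≤ 3 * |a - x| := by
  have hderiv : ∀ y ∈ Set.Icc (0:ℝ) 1,
      HasDerivWithinAt (fun y : ℝ => y^2 * Real.log y)
        (2*y*Real.log y + y) (Set.Icc (0:ℝ) 1) y := by
    intro y hy
    rcases eq_or_lt_of_le hy.1 with h | h
    · subst h
      rw [hasDerivWithinAt_iff_tendsto_slope]
      have hsub : Set.Icc (0:ℝ) 1 \ {0} ⊆ Set.Ioi (0:ℝ) := by
        rintro z ⟨⟨hz0, _⟩, hz⟩
        exact lt_of_le_of_ne hz0 (Ne.symm hz)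
      have key : Tendsto (fun z : ℝ => z * Real.log z)
          (𝓝[Set.Icc (0:ℝ) 1 \ {0}] 0) (𝓝 0) := by
        have h := (tendsto_log_mul_rpow_nhdsGT_zero one_pos).mono_left (nhdsWithin_mono _ hsub)
        exact h.congr (fun z => by rw [Real.rpow_one]; ring)
      have heq : ∀ᶠ z in 𝓝[Set.Icc (0:ℝ) 1 \ {0}] (0:ℝ),
          z * Real.log z = slope (fun y : ℝ => y^2 * Real.log y) 0 z := by
        filter_upwards [self_mem_nhdsWithin] with z hz
        have hz0 : z ≠ 0 := fun h => hz.2 (by simp [h])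
        simp only [slope_def_field]
        field_simp
        ring
      have h2 : Tendsto (slope (fun y : ℝ => y^2 * Real.log y) 0)
          (𝓝[Set.Icc (0:ℝ) 1 \ {0}] 0) (𝓝 0) := key.congr' heq
      simpa using h2
    · have h1 : HasDerivAt (fun y : ℝ => y^2 * Real.log y)
          (2*y*Real.log y + y) y := by
        have h2 := (hasDerivAt_pow 2 y).mul (Real.hasDerivAt_log (ne_of_gt h))
        refine h2.congr_deriv ?_
        field_simp
        ring
      exact h1.hasDerivWithinAt
  have hbound : ∀ y ∈ Set.Icc (0:ℝ) 1, ‖2*y*Real.log y + y‖ ≤ 3 := by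
    intro y hy
    have h1 : |y * Real.log y| ≤ 1 := xlogx_le y hy.1 hy.2
    have h2 : |y| ≤ 1 := by rw [abs_le]; exact ⟨by linarith [hy.1], hy.2⟩
    rw [Real.norm_eq_abs]
    calc |2*y*Real.log y + y| ≤ |2*y*Real.log y| + |y| := abs_add_le _ _
      _ ≤ 2 * 1 + 1 := by
          rw [show 2*y*Real.log y = 2*(y*Real.log y) by ring, abs_mul, abs_two]
          gcongr
      _ = 3 := by norm_num
  have hmvt := (convex_Icc (0:ℝ) 1).norm_image_sub_le_of_norm_hasDerivWithin_le
    hderiv hbound hx ha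
  simpa [Real.norm_eq_abs] using hmvt

lemma bern_nonneg (η k : ℕ) {x : ℝ} (hx : x ∈ Set.Icc (0:ℝ) 1) :
    0 ≤ (η.choose k : ℝ) * x^k * (1-x)^(η-k) := by
  have h1 := hx.1; have h2 := hx.2
  have h3 : (0:ℝ) ≤ 1 - x := by linarith
  positivity

-- Cauchy-Schwarz estimate
lemma cs_bern (η : ℕ) {x : ℝ} (hx : x ∈ Set.Icc (0:ℝ) 1) :
    ∑ k ∈ Finset.range (η+1),
      |(k:ℝ) - (η:ℝ)*x| * ((η.choose k : ℝ) * x^k * (1-x)^(η-k))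
      ≤ Real.sqrt η := by
  set p : ℕ → ℝ := fun k => (η.choose k : ℝ) * x^k * (1-x)^(η-k) with hp
  have hpn : ∀ k, 0 ≤ p k := fun k => bern_nonneg η k hx
  have hCS := Finset.sum_mul_sq_le_sq_mul_sq (Finset.range (η+1))
    (fun k => |(k:ℝ) - (η:ℝ)*x| * Real.sqrt (p k)) (fun k => Real.sqrt (p k))
  have hsum1 : ∑ k ∈ Finset.range (η+1), p k = 1 := sum_bern η x
  have hvar : ∑ k ∈ Finset.range (η+1), ((k:ℝ) - (η:ℝ)*x)^2 * p k = (η:ℝ) * x * (1-x) := by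
    rw [← var_bern η x]
    exact Finset.sum_congr rfl (fun k _ => by ring)
  have key : (∑ k ∈ Finset.range (η+1), |(k:ℝ) - (η:ℝ)*x| * p k)^2
      ≤ (η:ℝ) * x * (1-x) := by
    calc (∑ k ∈ Finset.range (η+1), |(k:ℝ) - (η:ℝ)*x| * p k)^2
        = (∑ k ∈ Finset.range (η+1),
            (|(k:ℝ) - (η:ℝ)*x| * Real.sqrt (p k)) * Real.sqrt (p k))^2 := by
          congr 1
          refine Finset.sum_congr rfl (fun k _ => ?_)
          rw [mul_assoc, Real.mul_self_sqrt (hpn k)]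
      _ ≤ (∑ k ∈ Finset.range (η+1), (|(k:ℝ) - (η:ℝ)*x| * Real.sqrt (p k))^2)
            * (∑ k ∈ Finset.range (η+1), (Real.sqrt (p k))^2) := hCS
      _ = (∑ k ∈ Finset.range (η+1), ((k:ℝ) - (η:ℝ)*x)^2 * p k)
            * (∑ k ∈ Finset.range (η+1), p k) := by
          congr 1
          · refine Finset.sum_congr rfl (fun k _ => ?_)
            rw [mul_pow, sq_abs, Real.sq_sqrt (hpn k)]
          · exact Finset.sum_congr rfl (fun k _ => Real.sq_sqrt (hpn k))
      _ = (η:ℝ) * x * (1-x) := by rw [hvar, hsum1, mul_one]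
  have hb : (η:ℝ) * x * (1-x) ≤ (η:ℝ) := by
    have h1 : x*(1-x) ≤ 1 := by nlinarith [sq_nonneg (x - 1/2)]
    calc (η:ℝ) * x * (1-x) = (η:ℝ) * (x*(1-x)) := by ring
      _ ≤ (η:ℝ) * 1 := mul_le_mul_of_nonneg_left h1 (Nat.cast_nonneg η)
      _ = (η:ℝ) := mul_one _
  have h0 : 0 ≤ ∑ k ∈ Finset.range (η+1), |(k:ℝ) - (η:ℝ)*x| * p k :=
    Finset.sum_nonneg (fun k _ => mul_nonneg (abs_nonneg _) (hpn k))
  calc ∑ k ∈ Finset.range (η+1), |(k:ℝ) - (η:ℝ)*x| * p k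
      = Real.sqrt ((∑ k ∈ Finset.range (η+1), |(k:ℝ) - (η:ℝ)*x| * p k)^2) :=
        (Real.sqrt_sq h0).symm
    _ ≤ Real.sqrt η := Real.sqrt_le_sqrt (key.trans hb)

-- integrability of bounded measurable composition
lemma integrable_comp_bdd {Ω : Type*} [MeasurableSpace Ω] (ℙ : Measure Ω)
    [IsProbabilityMeasure ℙ] {V : Ω → ℝ} (hV : Measurable V)
    (hV01 : ∀ ω, V ω ∈ Set.Icc (0:ℝ) 1) {f : ℝ → ℝ} (hf : Measurable f)
    {M : ℝ} (hM : ∀ x ∈ Set.Icc (0:ℝ) 1, |f x| ≤ M) :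
    Integrable (fun ω => f (V ω)) ℙ := by
  refine (integrable_const M).mono' ((hf.comp hV).aestronglyMeasurable) (ae_of_all _ fun ω => ?_)
  simpa [Real.norm_eq_abs] using hM _ (hV01 ω)

-- expectation of a function of a discrete r.v. supported on s
lemma key_sum {Ω : Type*} [MeasurableSpace Ω] (ℙ : Measure Ω) [IsProbabilityMeasure ℙ]
    (J : Ω → ℕ) (hJ : Measurable J) (s : Finset ℕ)
    (h1 : ∑ k ∈ s, (ℙ {ω | J ω = k}).toReal = 1) (f : ℕ → ℝ) :
    ∫ ω, f (J ω) ∂ℙ = ∑ k ∈ s, f k * (ℙ {ω | J ω = k}).toReal := by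
  have hmk : ∀ k : ℕ, MeasurableSet {ω | J ω = k} := fun k =>
    hJ (measurableSet_singleton k)
  have hA : MeasurableSet {ω | J ω ∈ s} := hJ (Finset.measurableSet s)
  have hAeq : {ω | J ω ∈ s} = ⋃ k ∈ s, {ω | J ω = k} := by
    ext ω; simp
  have hmeasA : ℙ {ω | J ω ∈ s} = ∑ k ∈ s, ℙ {ω | J ω = k} := by
    rw [hAeq]
    refine measure_biUnion_finset ?_ (fun k _ => hmk k)
    intro k _ l _ hkl
    exact Set.disjoint_left.2 (fun ω h1 h2 => hkl (h1 ▸ h2.symm ▸ rfl))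
  have hA1 : ℙ {ω | J ω ∈ s} = 1 := by
    have h2 : (ℙ {ω | J ω ∈ s}).toReal = 1 := by
      rw [hmeasA, ENNReal.toReal_sum (fun k _ => measure_ne_top ℙ _)]
      exact h1
    have h3 : ℙ {ω | J ω ∈ s} ≠ ⊤ := measure_ne_top ℙ _
    rw [← ENNReal.ofReal_toReal h3, h2]; simp
  have hae : ∀ᵐ ω ∂ℙ, J ω ∈ s := by
    rw [ae_iff]
    have : {ω | ¬ J ω ∈ s} = {ω | J ω ∈ s}ᶜ := rfl
    rw [this, measure_compl hA (measure_ne_top ℙ _), hA1, measure_univ, tsub_self]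
  have hcong : ∫ ω, f (J ω) ∂ℙ
      = ∫ ω, (∑ k ∈ s, Set.indicator {ω' | J ω' = k} (fun _ => f k) ω) ∂ℙ := by
    refine integral_congr_ae ?_
    filter_upwards [hae] with ω hω
    simp only [Set.indicator_apply, Set.mem_setOf_eq]
    rw [Finset.sum_ite_eq s (J ω) (fun k => f k), if_pos hω]
  rw [hcong, integral_finset_sum _ (fun k _ => (integrable_const (f k)).indicator (hmk k))]
  refine Finset.sum_congr rfl (fun k _ => ?_)
  rw [integral_indicator_const (f k) (hmk k), smul_eq_mul, mul_comm]
  rfl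

lemma tendsto_sqrt_atTop' : Tendsto Real.sqrt atTop atTop := by
  have h := tendsto_rpow_atTop (by norm_num : (0:ℝ) < 1/2)
  refine h.congr' ?_
  filter_upwards [eventually_ge_atTop (0:ℝ)] with x hx
  rw [Real.sqrt_eq_rpow]

lemma tendsto_log_div_sqrt : Tendsto (fun x : ℝ => Real.log x / Real.sqrt x) atTop (𝓝 0) := by
  have h := (isLittleO_log_rpow_atTop (by norm_num : (0:ℝ) < 1/2)).tendsto_div_nhds_zero
  refine h.congr' ?_
  filter_upwards [eventually_ge_atTop (0:ℝ)] with x hx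
  rw [Real.sqrt_eq_rpow]

lemma tendsto_B (C : ℝ) (hC : 0 ≤ C) :
    Tendsto (fun n : ℕ => (3 + 2*Real.log n) * ((Real.sqrt n + C) / n)) atTop (𝓝 0) := by
  have h1 : Tendsto (fun x : ℝ => Real.log x / Real.sqrt x) atTop (𝓝 0) := tendsto_log_div_sqrt
  have h2 : Tendsto (fun x : ℝ => 1 / Real.sqrt x) atTop (𝓝 0) := by
    simp only [one_div]; exact tendsto_sqrt_atTop'.inv_tendsto_atTop
  have hD : Tendsto (fun x : ℝ => (1+C) * (3*(1/Real.sqrt x) + 2*(Real.log x/Real.sqrt x)))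
      atTop (𝓝 0) := by
    have := ((h2.const_mul 3).add (h1.const_mul 2)).const_mul (1+C)
    simpa using this
  have hDn : Tendsto (fun n : ℕ => (1+C) * (3*(1/Real.sqrt n) + 2*(Real.log n/Real.sqrt n)))
      atTop (𝓝 0) := hD.comp tendsto_natCast_atTop_atTop
  refine squeeze_zero' ?_ ?_ hDn
  · filter_upwards [eventually_ge_atTop 1] with n hn
    have hn1 : (1:ℝ) ≤ (n:ℝ) := by exact_mod_cast hn
    have hlog : 0 ≤ Real.log n := Real.log_nonneg hn1
    have hs : 0 ≤ Real.sqrt n := Real.sqrt_nonneg _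
    positivity
  · filter_upwards [eventually_ge_atTop 1] with n hn
    have hn1 : (1:ℝ) ≤ (n:ℝ) := by exact_mod_cast hn
    have hS1 : 1 ≤ Real.sqrt n := by
      rw [show (1:ℝ) = Real.sqrt 1 by simp]
      exact Real.sqrt_le_sqrt hn1
    have hS0 : 0 < Real.sqrt n := lt_of_lt_of_le one_pos hS1
    have hnn : (n:ℝ) = Real.sqrt n * Real.sqrt n := (Real.mul_self_sqrt (by linarith)).symm
    have hlog : 0 ≤ Real.log n := Real.log_nonneg hn1
    set S := Real.sqrt n with hSdef
    set L := Real.log n with hLdef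
    rw [hnn]
    have hrhs : (1+C)*(3*(1/S)+2*(L/S)) = ((1+C)*(3+2*L))/S := by
      field_simp
    have hlhs : (3+2*L)*((S+C)/(S*S)) = ((3+2*L)*(S+C))/(S*S) := by ring
    rw [hlhs, hrhs, div_le_div_iff₀ (by positivity) hS0]
    have h3 : S + C ≤ (1+C)*S := by nlinarith [mul_le_mul_of_nonneg_left hS1 hC]
    have h4 : (0:ℝ) ≤ 3 + 2*L := by linarith
    calc (3+2*L)*(S+C)*S ≤ (3+2*L)*((1+C)*S)*S := by
          have := mul_le_mul_of_nonneg_left h3 h4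
          nlinarith [this, hS0.le]
      _ = (1+C)*(3+2*L)*(S*S) := by ring

lemma coeff_eq (m n : ℕ) (hn : 1 ≤ n) :
    ((m:ℝ))^2 * Real.log m
      = (n:ℝ)^2 * (((m:ℝ)/n)^2 * Real.log ((m:ℝ)/n) + ((m:ℝ)/n)^2 * Real.log n) := by
  have hn0 : (n:ℝ) ≠ 0 := by positivity
  rcases Nat.eq_zero_or_pos m with hm | hm
  · subst hm; simp
  · have hm0 : (m:ℝ) ≠ 0 := by positivity
    rw [Real.log_div hm0 hn0]
    field_simp
    ring

/-- As `n → ∞`,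
`E[I_n² · log I_n] = E[V²]·n²·log n + E[V²·log V]·n² + o(n²)` for the subtree size `I n`
of a random split tree with `n` balls (with `0·log 0 = 0`). -/
theorem stmt14
    (b s₀ s₁ : ℕ) (hb : 2 ≤ b)
    {Ω : Type*} [MeasurableSpace Ω] (ℙ : Measure Ω) [IsProbabilityMeasure ℙ]
    (V : Ω → ℝ) (hVmeas : Measurable V)
    (hV01 : ∀ ω, V ω ∈ Set.Icc (0:ℝ) 1)
    (hVdens : ℙ.map V ≪ (volume : Measure ℝ))
    (hVtail : ∀ x : ℝ, x < 1 → ℙ {ω | V ω ≤ x} < 1)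
    (hEV : (∫ ω, V ω ∂ℙ) = 1 / b)
    (I : ℕ → Ω → ℕ) (hImeas : ∀ n, Measurable (I n))
    (hIdist : ∀ n : ℕ, s₀ + b * s₁ ≤ n → ∀ k : ℕ, k ≤ n - s₀ - b * s₁ →
      (ℙ {ω | I n ω = k + s₁}).toReal
        = ∫ ω, ((n - s₀ - b * s₁).choose k : ℝ) * V ω ^ k
            * (1 - V ω) ^ (n - s₀ - b * s₁ - k) ∂ℙ) :
    (fun n : ℕ => (∫ ω, (I n ω : ℝ) ^ 2 * Real.log (I n ω) ∂ℙ)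
        - (∫ ω, (V ω) ^ 2 ∂ℙ) * (n : ℝ) ^ 2 * Real.log n
        - (∫ ω, (V ω) ^ 2 * Real.log (V ω) ∂ℙ) * (n : ℝ) ^ 2)
      =o[atTop] fun n : ℕ => ((n : ℝ)) ^ 2 := by
  set C : ℝ := (s₁:ℝ) + ((s₀:ℝ) + (b:ℝ)*(s₁:ℝ)) with hCdef
  have hC : 0 ≤ C := by positivity
  have hB := tendsto_B C hC
  rw [isLittleO_iff]
  intro ε hε
  filter_upwards [hB.eventually_lt_const hε, eventually_ge_atTop 1,
    eventually_ge_atTop (s₀ + b * s₁)] with n hBn hn1 hn2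
  -- main estimate
  have hbs : s₁ ≤ b * s₁ := Nat.le_mul_of_pos_left s₁ (by omega)
  set η := n - s₀ - b * s₁ with hη
  have hηn : η + (s₀ + b * s₁) = n := by omega
  have hn0 : (0:ℝ) < (n:ℝ) := by exact_mod_cast hn1
  have hlogn : 0 ≤ Real.log n := Real.log_nonneg (by exact_mod_cast hn1)
  set p : ℕ → ℝ → ℝ := fun k x => (η.choose k : ℝ) * x^k * (1-x)^(η - k) with hpdef
  set G : ℝ → ℝ := fun x => x^2 * Real.log x + x^2 * Real.log n with hGdef
  -- measurability
  have hmp : ∀ k, Measurable (fun x : ℝ => p k x) := by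
    intro k
    exact ((measurable_id.pow_const k).const_mul _).mul
      ((measurable_const.sub measurable_id).pow_const _)
  have hmG : Measurable G := by
    exact ((measurable_id.pow_const 2).mul Real.measurable_log).add
      ((measurable_id.pow_const 2).mul_const _)
  -- integrability
  have hpb : ∀ k, ∀ x ∈ Set.Icc (0:ℝ) 1, |p k x| ≤ (η.choose k : ℝ) := by
    intro k x hx
    rw [abs_of_nonneg (bern_nonneg η k hx)]
    calc (η.choose k : ℝ) * x^k * (1-x)^(η-k)
        ≤ (η.choose k : ℝ) * 1 * 1 := by
          have h1 : x^k ≤ 1 := pow_le_one₀ hx.1 hx.2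
          have h2 : (1-x)^(η-k) ≤ 1 := pow_le_one₀ (by linarith [hx.2]) (by linarith [hx.1])
          have h4 : (0:ℝ) ≤ (1-x)^(η-k) := pow_nonneg (by linarith [hx.2]) _
          have hc : (0:ℝ) ≤ (η.choose k : ℝ) := Nat.cast_nonneg _
          exact mul_le_mul (mul_le_mul_of_nonneg_left h1 hc) h2 h4 (by positivity)
      _ = (η.choose k : ℝ) := by ring
  have hip : ∀ k, Integrable (fun ω => p k (V ω)) ℙ := fun k =>
    integrable_comp_bdd ℙ hVmeas hV01 (hmp k) (hpb k)
  have hx2log : ∀ x ∈ Set.Icc (0:ℝ) 1, |x^2 * Real.log x| ≤ 1 := by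
    intro x hx
    have habs : |x| ≤ 1 := by rw [abs_le]; exact ⟨by linarith [hx.1], hx.2⟩
    calc |x^2 * Real.log x| = |x| * |x * Real.log x| := by
          rw [show x^2*Real.log x = x*(x*Real.log x) by ring, abs_mul]
      _ ≤ 1 * 1 := mul_le_mul habs (xlogx_le x hx.1 hx.2) (abs_nonneg _) zero_le_one
      _ = 1 := by norm_num
  have hiG : Integrable (fun ω => G (V ω)) ℙ := by
    refine integrable_comp_bdd ℙ hVmeas hV01 hmG (M := 1 + Real.log n) ?_
    intro x hx
    calc |G x| ≤ |x^2 * Real.log x| + |x^2 * Real.log n| := abs_add_le _ _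
      _ ≤ 1 + Real.log n := by
          refine add_le_add (hx2log x hx) ?_
          rw [abs_mul, abs_of_nonneg hlogn]
          have h1 : |x^2| ≤ 1 := by
            rw [abs_le]; constructor <;> nlinarith [hx.1, hx.2]
          calc |x^2| * Real.log n ≤ 1 * Real.log n :=
                mul_le_mul_of_nonneg_right h1 hlogn
            _ = Real.log n := one_mul _
  -- sum of probabilities is 1
  have hsum_int : ∑ k ∈ Finset.range (η+1), ∫ ω, p k (V ω) ∂ℙ = 1 := by
    rw [← integral_finset_sum _ (fun k _ => hip k)]
    have heq : ∀ ω, ∑ k ∈ Finset.range (η+1), p k (V ω) = 1 := fun ω => sum_bern η (V ω)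
    simp only [heq, integral_const, probReal_univ, smul_eq_mul, mul_one]
  have h1sum : ∑ k ∈ Finset.range (η+1), (ℙ {ω | I n ω = k + s₁}).toReal = 1 := by
    rw [Finset.sum_congr rfl (fun k hk => hIdist n hn2 k (by
      simp only [Finset.mem_range] at hk; omega))]
    exact hsum_int
  -- expectation of g(I n) as a sum
  have hinj : ∀ a ∈ Finset.range (η+1), ∀ c ∈ Finset.range (η+1),
      a + s₁ = c + s₁ → a = c := fun a _ c _ h => by omega
  have h1img : ∑ j ∈ (Finset.range (η+1)).image (· + s₁),
      (ℙ {ω | I n ω = j}).toReal = 1 := by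
    rw [Finset.sum_image hinj]; exact h1sum
  have hEf := key_sum ℙ (I n) (hImeas n) ((Finset.range (η+1)).image (· + s₁)) h1img
    (fun m => (m:ℝ)^2 * Real.log m)
  rw [Finset.sum_image hinj] at hEf
  have hstep1 : ∫ ω, (I n ω : ℝ)^2 * Real.log (I n ω) ∂ℙ
      = ∫ ω, (∑ k ∈ Finset.range (η+1),
          ((k+s₁:ℕ):ℝ)^2 * Real.log ((k+s₁:ℕ):ℝ) * p k (V ω)) ∂ℙ := by
    rw [hEf]
    rw [integral_finset_sum _ (fun k _ => (hip k).const_mul _)]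
    refine Finset.sum_congr rfl (fun k hk => ?_)
    rw [hIdist n hn2 k (by simp only [Finset.mem_range] at hk; omega)]
    exact (integral_const_mul _ _).symm
  have hiV2 : Integrable (fun ω => (V ω)^2) ℙ := by
    refine integrable_comp_bdd ℙ hVmeas hV01 (measurable_id.pow_const 2) (M := 1) ?_
    intro x hx
    simp only [id_eq]
    rw [abs_le]; constructor <;> nlinarith [hx.1, hx.2]
  have hiV2l : Integrable (fun ω => (V ω)^2 * Real.log (V ω)) ℙ :=
    integrable_comp_bdd ℙ hVmeas hV01
      ((measurable_id.pow_const 2).mul Real.measurable_log) hx2log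
  have hstep2 : (∫ ω, (V ω)^2 ∂ℙ) * (n:ℝ)^2 * Real.log n
      + (∫ ω, (V ω)^2 * Real.log (V ω) ∂ℙ) * (n:ℝ)^2
      = ∫ ω, (n:ℝ)^2 * G (V ω) ∂ℙ := by
    rw [integral_const_mul]
    have hGeq : (fun ω => G (V ω))
        = fun ω => (V ω)^2 * Real.log (V ω) + (V ω)^2 * Real.log n := rfl
    rw [hGeq, integral_add hiV2l (hiV2.mul_const _), integral_mul_const]
    ring
  have hint1 : Integrable (fun ω => ∑ k ∈ Finset.range (η+1),
      ((k+s₁:ℕ):ℝ)^2 * Real.log ((k+s₁:ℕ):ℝ) * p k (V ω)) ℙ :=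
    integrable_finset_sum _ (fun k _ => (hip k).const_mul _)
  have hint2 : Integrable (fun ω => (n:ℝ)^2 * G (V ω)) ℙ := hiG.const_mul _
  have hT : (∫ ω, (I n ω : ℝ)^2 * Real.log (I n ω) ∂ℙ)
      - (∫ ω, (V ω)^2 ∂ℙ) * (n:ℝ)^2 * Real.log n
      - (∫ ω, (V ω)^2 * Real.log (V ω) ∂ℙ) * (n:ℝ)^2
      = ∫ ω, ((∑ k ∈ Finset.range (η+1),
          ((k+s₁:ℕ):ℝ)^2 * Real.log ((k+s₁:ℕ):ℝ) * p k (V ω))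
          - (n:ℝ)^2 * G (V ω)) ∂ℙ := by
    rw [integral_sub hint1 hint2, ← hstep1, ← hstep2]
    ring
  -- pointwise bound
  have hpoint : ∀ ω, ‖(∑ k ∈ Finset.range (η+1),
      ((k+s₁:ℕ):ℝ)^2 * Real.log ((k+s₁:ℕ):ℝ) * p k (V ω))
      - (n:ℝ)^2 * G (V ω)‖
      ≤ ((3 + 2*Real.log n) * ((Real.sqrt n + C)/n)) * (n:ℝ)^2 := by
    intro ω
    set x := V ω with hxdef
    have hx : x ∈ Set.Icc (0:ℝ) 1 := hV01 ω
    set a : ℕ → ℝ := fun k => ((k+s₁:ℕ):ℝ)/n with hadef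
    have ha01 : ∀ k ∈ Finset.range (η+1), a k ∈ Set.Icc (0:ℝ) 1 := by
      intro k hk
      simp only [Finset.mem_range] at hk
      constructor
      · positivity
      · rw [div_le_one hn0]
        exact_mod_cast (by omega : k + s₁ ≤ n)
    have hsplit : (∑ k ∈ Finset.range (η+1),
        ((k+s₁:ℕ):ℝ)^2 * Real.log ((k+s₁:ℕ):ℝ) * p k x) - (n:ℝ)^2 * G x
        = ∑ k ∈ Finset.range (η+1), ((n:ℝ)^2 * (G (a k) - G x)) * p k x := by
      have hone : (n:ℝ)^2 * G x = ∑ k ∈ Finset.range (η+1), ((n:ℝ)^2 * G x) * p k x := by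
        rw [← Finset.mul_sum, sum_bern η x, mul_one]
      rw [hone, ← Finset.sum_sub_distrib]
      refine Finset.sum_congr rfl (fun k hk => ?_)
      have hc := coeff_eq (k+s₁) n hn1
      rw [hc]
      ring
    have hGlip : ∀ y ∈ Set.Icc (0:ℝ) 1, |G y - G x| ≤ (3 + 2*Real.log n) * |y - x| := by
      intro y hy
      have h1 := lip_xxlog hy hx
      have h2 := lip_sq hy hx
      have hge : G y - G x = (y^2*Real.log y - x^2*Real.log x)
          + (y^2 - x^2)*Real.log n := by simp only [hGdef]; ring
      calc |G y - G x| ≤ |y^2*Real.log y - x^2*Real.log x| + |(y^2 - x^2)*Real.log n| := by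
            rw [hge]; exact abs_add_le _ _
        _ ≤ 3*|y-x| + (2*|y-x|)*Real.log n := by
            refine add_le_add h1 ?_
            rw [abs_mul, abs_of_nonneg hlogn]
            exact mul_le_mul_of_nonneg_right h2 hlogn
        _ = (3 + 2*Real.log n) * |y - x| := by ring
    have habs : ∀ k ∈ Finset.range (η+1), |a k - x| ≤ (|(k:ℝ) - (η:ℝ)*x| + C)/n := by
      intro k hk
      have hn' : (n:ℝ) = (η:ℝ) + ((s₀:ℝ)+(b:ℝ)*(s₁:ℝ)) := by
        rw [← hηn]; push_cast; ring
      have hd : a k - x = (((k:ℝ) - (η:ℝ)*x) + ((s₁:ℝ) - ((s₀:ℝ)+(b:ℝ)*(s₁:ℝ))*x))/n := by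
        simp only [hadef]
        rw [div_sub' hn0.ne']
        congr 1
        rw [hn']
        push_cast
        ring
      rw [hd, abs_div, abs_of_pos hn0]
      have hC2 : |(s₁:ℝ) - ((s₀:ℝ)+(b:ℝ)*(s₁:ℝ))*x| ≤ C := by
        have hm : (0:ℝ) ≤ (s₀:ℝ)+(b:ℝ)*(s₁:ℝ) := by positivity
        have h3 : |((s₀:ℝ)+(b:ℝ)*(s₁:ℝ))*x| ≤ (s₀:ℝ)+(b:ℝ)*(s₁:ℝ) := by
          rw [abs_mul, abs_of_nonneg hm]
          calc ((s₀:ℝ)+(b:ℝ)*(s₁:ℝ)) * |x| ≤ ((s₀:ℝ)+(b:ℝ)*(s₁:ℝ)) * 1 := by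
                refine mul_le_mul_of_nonneg_left ?_ hm
                rw [abs_le]; exact ⟨by linarith [hx.1], hx.2⟩
            _ = (s₀:ℝ)+(b:ℝ)*(s₁:ℝ) := mul_one _
        have htri : |(s₁:ℝ) - ((s₀:ℝ)+(b:ℝ)*(s₁:ℝ))*x|
            ≤ |(s₁:ℝ)| + |((s₀:ℝ)+(b:ℝ)*(s₁:ℝ))*x| := by
          rw [sub_eq_add_neg]
          exact (abs_add_le _ _).trans (le_of_eq (by rw [abs_neg]))
        calc |(s₁:ℝ) - ((s₀:ℝ)+(b:ℝ)*(s₁:ℝ))*x|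
            ≤ |(s₁:ℝ)| + |((s₀:ℝ)+(b:ℝ)*(s₁:ℝ))*x| := htri
          _ ≤ (s₁:ℝ) + ((s₀:ℝ)+(b:ℝ)*(s₁:ℝ)) := by
              refine add_le_add ?_ h3
              rw [abs_of_nonneg (by positivity : (0:ℝ) ≤ (s₁:ℝ))]
          _ = C := by rw [hCdef]
      gcongr
      calc |((k:ℝ) - (η:ℝ)*x) + ((s₁:ℝ) - ((s₀:ℝ)+(b:ℝ)*(s₁:ℝ))*x)|
          ≤ |(k:ℝ) - (η:ℝ)*x| + |(s₁:ℝ) - ((s₀:ℝ)+(b:ℝ)*(s₁:ℝ))*x| := abs_add_le _ _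
        _ ≤ |(k:ℝ) - (η:ℝ)*x| + C := add_le_add_right hC2 _
    have hsum_abs : ∑ k ∈ Finset.range (η+1), |a k - x| * p k x ≤ (Real.sqrt n + C)/n := by
      have hstep : ∑ k ∈ Finset.range (η+1), |a k - x| * p k x
          ≤ ∑ k ∈ Finset.range (η+1), ((|(k:ℝ) - (η:ℝ)*x| + C)/n) * p k x :=
        Finset.sum_le_sum (fun k hk =>
          mul_le_mul_of_nonneg_right (habs k hk) (bern_nonneg η k hx))
      refine hstep.trans ?_
      have hrw : ∑ k ∈ Finset.range (η+1), ((|(k:ℝ) - (η:ℝ)*x| + C)/n) * p k x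
          = ((∑ k ∈ Finset.range (η+1), |(k:ℝ) - (η:ℝ)*x| * p k x)
            + C * (∑ k ∈ Finset.range (η+1), p k x))/n := by
        have e : ∀ k : ℕ, ((|(k:ℝ)-(η:ℝ)*x| + C)/n) * p k x
            = (|(k:ℝ)-(η:ℝ)*x| * p k x + C * p k x)/(n:ℝ) := fun k => by ring
        rw [Finset.sum_congr rfl (fun k _ => e k), ← Finset.sum_div,
          Finset.sum_add_distrib, ← Finset.mul_sum]
      rw [hrw, sum_bern η x, mul_one]
      gcongr
      exact (cs_bern η hx).trans
        (Real.sqrt_le_sqrt (Nat.cast_le.2 (by omega : η ≤ n)))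
    rw [hsplit]
    have hL0 : (0:ℝ) ≤ 3 + 2*Real.log n := by linarith
    calc ‖∑ k ∈ Finset.range (η+1), ((n:ℝ)^2 * (G (a k) - G x)) * p k x‖
        ≤ ∑ k ∈ Finset.range (η+1), ‖((n:ℝ)^2 * (G (a k) - G x)) * p k x‖ :=
          norm_sum_le _ _
      _ = ∑ k ∈ Finset.range (η+1), ((n:ℝ)^2 * |G (a k) - G x|) * p k x := by
          refine Finset.sum_congr rfl fun k hk => ?_
          rw [Real.norm_eq_abs, abs_mul, abs_mul,
            abs_of_nonneg (sq_nonneg ((n:ℝ))), abs_of_nonneg (bern_nonneg η k hx)]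
      _ ≤ ∑ k ∈ Finset.range (η+1),
            ((n:ℝ)^2 * ((3+2*Real.log n) * |a k - x|)) * p k x := by
          refine Finset.sum_le_sum fun k hk => ?_
          exact mul_le_mul_of_nonneg_right
            (mul_le_mul_of_nonneg_left (hGlip (a k) (ha01 k hk)) (sq_nonneg _))
            (bern_nonneg η k hx)
      _ = ((n:ℝ)^2 * (3+2*Real.log n)) * ∑ k ∈ Finset.range (η+1), |a k - x| * p k x := by
          rw [Finset.mul_sum]
          exact Finset.sum_congr rfl fun k _ => by ring
      _ ≤ ((n:ℝ)^2 * (3+2*Real.log n)) * ((Real.sqrt n + C)/n) :=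
          mul_le_mul_of_nonneg_left hsum_abs (mul_nonneg (sq_nonneg _) hL0)
      _ = ((3 + 2*Real.log n) * ((Real.sqrt n + C)/n)) * (n:ℝ)^2 := by ring
  rw [hT]
  have hb2 := norm_integral_le_of_norm_le
    (integrable_const (μ := ℙ) (((3 + 2*Real.log n) * ((Real.sqrt n + C)/n)) * (n:ℝ)^2))
    (ae_of_all _ hpoint)
  rw [integral_const, probReal_univ, one_smul] at hb2
  refine hb2.trans ?_
  rw [Real.norm_eq_abs, abs_of_nonneg (sq_nonneg ((n:ℝ)))]
  exact mul_le_mul_of_nonneg_right hBn.le (sq_nonneg _)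
end

section
/- For every y ∈ ℝ, b·E[(I_n/n)·1{I_n ≥ e^{−y}·n}] + (s₀/n)·1{n − s₀ ≥ e^{−y}·n} → b·E[V·1{V ≥ e^{−y}}] as n → ∞. (This says that the transition distribution functions F_{−log n} of the associated Markov chain converge pointwise to F(y) = b·E[V·1{−log V ≤ y}].) -/
open MeasureTheory Filter Topology Asymptotics

namespace Stmt15Aux
open Finset



/-- binomial weights -/
noncomputable def W (n k : ℕ) (x : ℝ) : ℝ := (n.choose k : ℝ) * x ^ k * (1 - x) ^ (n - k)

lemma W_eval (n k : ℕ) (x : ℝ) : (bernsteinPolynomial ℝ n k).eval x = W n k x := by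
  simp [bernsteinPolynomial, W]

lemma W_nonneg {n k : ℕ} {x : ℝ} (hx : x ∈ Set.Icc (0:ℝ) 1) : 0 ≤ W n k x := by
  have h1 : (0:ℝ) ≤ x := hx.1
  have h2 : (0:ℝ) ≤ 1 - x := by linarith [hx.2]
  unfold W; positivity

lemma W_sum (n : ℕ) (x : ℝ) : ∑ k ∈ range (n + 1), W n k x = 1 := by
  have := bernsteinPolynomial.sum ℝ n
  have h := congrArg (Polynomial.eval x) this
  simpa [Polynomial.eval_finset_sum, W_eval] using h

lemma W_var (n : ℕ) (x : ℝ) :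
    ∑ k ∈ range (n + 1), ((n : ℝ) * x - k) ^ 2 * W n k x = n * x * (1 - x) := by
  have := bernsteinPolynomial.variance (R := ℝ) n
  have h := congrArg (Polynomial.eval x) this
  simp only [Polynomial.eval_finset_sum, Polynomial.eval_mul, Polynomial.eval_pow,
    Polynomial.eval_sub, Polynomial.eval_natCast, nsmul_eq_mul, Polynomial.eval_X,
    Polynomial.eval_one, W_eval] at h
  convert h using 2

lemma W_cheb {n : ℕ} (hn : 0 < n) {x : ℝ} (hx : x ∈ Set.Icc (0:ℝ) 1) {δ : ℝ} (hδ : 0 < δ) :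
    ∑ k ∈ (range (n + 1)).filter (fun k : ℕ => δ * n ≤ |(k : ℝ) - n * x|), W n k x
      ≤ 1 / (δ ^ 2 * n) := by
  have hn' : (0:ℝ) < n := by exact_mod_cast hn
  set S := ∑ k ∈ (range (n + 1)).filter (fun k : ℕ => δ * n ≤ |(k : ℝ) - n * x|), W n k x with hS
  have hSnn : 0 ≤ S := Finset.sum_nonneg fun k _ => W_nonneg hx
  have key : (δ * n) ^ 2 * S ≤ n * x * (1 - x) := by
    rw [hS, Finset.mul_sum]
    calc ∑ k ∈ (range (n + 1)).filter (fun k : ℕ => δ * n ≤ |(k : ℝ) - n * x|),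
            (δ * n)^2 * W n k x
        ≤ ∑ k ∈ (range (n + 1)).filter (fun k : ℕ => δ * n ≤ |(k : ℝ) - n * x|),
            ((n : ℝ) * x - k) ^ 2 * W n k x := by
          apply Finset.sum_le_sum
          intro k hk
          rw [Finset.mem_filter] at hk
          have h0 : δ * n ≤ |(n:ℝ) * x - k| := by rw [abs_sub_comm]; exact hk.2
          have h1 : (δ * n) ^ 2 ≤ ((n:ℝ) * x - k) ^ 2 := by
            calc (δ * n) ^ 2 ≤ |(n:ℝ) * x - k| ^ 2 := by
                  exact pow_le_pow_left₀ (by positivity) h0 2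
              _ = ((n:ℝ) * x - k) ^ 2 := sq_abs _
          exact mul_le_mul_of_nonneg_right h1 (W_nonneg hx)
      _ ≤ ∑ k ∈ range (n + 1), ((n : ℝ) * x - k) ^ 2 * W n k x := by
          apply Finset.sum_le_sum_of_subset_of_nonneg (Finset.filter_subset _ _)
          intro k _ _
          exact mul_nonneg (sq_nonneg _) (W_nonneg hx)
      _ = n * x * (1 - x) := W_var n x
  have hx1 : x * (1 - x) ≤ 1 := by nlinarith [hx.1, hx.2]
  have hb : (n:ℝ) * x * (1 - x) ≤ n := by
    calc (n:ℝ) * x * (1 - x) = n * (x * (1 - x)) := by ring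
      _ ≤ n * 1 := mul_le_mul_of_nonneg_left hx1 hn'.le
      _ = n := mul_one _
  rw [le_div_iff₀ (by positivity : (0:ℝ) < δ^2 * n)]
  nlinarith [key, hb, hSnn]



noncomputable def g (a s₁ : ℕ) (c : ℝ) (n : ℕ) (x : ℝ) : ℝ :=
  ∑ k ∈ range (n - a + 1),
    (if c * n ≤ (k : ℝ) + s₁ then ((k : ℝ) + s₁) / n else 0) * W (n - a) k x

lemma t_nonneg (s₁ : ℕ) (c : ℝ) (n k : ℕ) :
    0 ≤ (if c * n ≤ (k : ℝ) + s₁ then ((k : ℝ) + s₁) / n else 0) := by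
  split <;> positivity

lemma t_le_one {a s₁ : ℕ} (hs : s₁ ≤ a) {c : ℝ} {n k : ℕ} (hn : a + 1 ≤ n) (hk : k ≤ n - a) :
    (if c * n ≤ (k : ℝ) + s₁ then ((k : ℝ) + s₁) / n else 0) ≤ 1 := by
  have hn' : 0 < n := lt_of_lt_of_le (Nat.succ_pos a) hn
  have hn0 : (0:ℝ) < n := by exact_mod_cast hn'
  split
  · rw [div_le_one hn0]
    have hnat : k + s₁ ≤ n := by omega
    exact_mod_cast hnat
  · exact zero_le_one

lemma bound_tendsto (a : ℕ) {δ : ℝ} (hδ : 0 < δ) :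
    Tendsto (fun n : ℕ => 1 / (δ ^ 2 * ((n - a : ℕ) : ℝ))) atTop (𝓝 0) := by
  have h1 : Tendsto (fun n : ℕ => ((n - a : ℕ) : ℝ)) atTop atTop :=
    tendsto_natCast_atTop_atTop.comp (tendsto_sub_atTop_nat a)
  have h2 : Tendsto (fun n : ℕ => δ ^ 2 * ((n - a : ℕ) : ℝ)) atTop atTop := by
    exact (tendsto_const_mul_atTop_of_pos (by positivity)).mpr h1
  simpa [Function.comp_def, one_div, mul_inv, mul_comm] using tendsto_inv_atTop_zero.comp h2



lemma t_le' (s₁ : ℕ) (c : ℝ) (n k : ℕ) (hk : k ≤ n) :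
    (if c * n ≤ (k : ℝ) + s₁ then ((k : ℝ) + s₁) / n else 0) ≤ 1 + s₁ := by
  split
  · rcases Nat.eq_zero_or_pos n with h | h
    · subst h; simp; positivity
    · have hn0 : (0:ℝ) < n := by exact_mod_cast h
      rw [div_le_iff₀ hn0]
      have hkn : (k:ℝ) ≤ n := by exact_mod_cast hk
      have h1 : (1:ℝ) ≤ n := by exact_mod_cast h
      have h2 : (s₁:ℝ) * 1 ≤ (s₁:ℝ) * n := by
        exact mul_le_mul_of_nonneg_left h1 (by positivity)
      nlinarith
  · positivity

lemma g_nonneg {a s₁ : ℕ} (c : ℝ) (n : ℕ) {x : ℝ} (hx : x ∈ Set.Icc (0:ℝ) 1) :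
    0 ≤ g a s₁ c n x :=
  Finset.sum_nonneg fun k _ => mul_nonneg (t_nonneg s₁ c n k) (W_nonneg hx)

lemma g_bound {a s₁ : ℕ} (c : ℝ) (n : ℕ) {x : ℝ} (hx : x ∈ Set.Icc (0:ℝ) 1) :
    |g a s₁ c n x| ≤ 1 + s₁ := by
  rw [abs_of_nonneg (g_nonneg c n hx)]
  calc g a s₁ c n x
      ≤ ∑ k ∈ range (n - a + 1), (1 + (s₁:ℝ)) * W (n - a) k x := by
        apply Finset.sum_le_sum
        intro k hk
        have hk' : k ≤ n := le_trans (Nat.lt_succ_iff.mp (Finset.mem_range.mp hk)) (Nat.sub_le n a)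
        exact mul_le_mul_of_nonneg_right (t_le' s₁ c n k hk') (W_nonneg hx)
    _ = 1 + s₁ := by rw [← Finset.mul_sum, W_sum, mul_one]



set_option maxHeartbeats 2000000 in
lemma g_tendsto {a s₁ : ℕ} (hs : s₁ ≤ a) {c x : ℝ} (hc : 0 < c)
    (hx : x ∈ Set.Icc (0:ℝ) 1) (hxc : x ≠ c) :
    Tendsto (fun n => g a s₁ c n x) atTop (𝓝 (if c ≤ x then x else 0)) := by
  rcases lt_or_gt_of_ne hxc with hlt | hgt
  · -- x < c, limit 0
    rw [if_neg (not_le.mpr hlt)]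
    set δ := (c - x) / 2 with hδdef
    have hδ : 0 < δ := by rw [hδdef]; linarith
    apply squeeze_zero' (g := fun n : ℕ => 1 / (δ ^ 2 * ((n - a : ℕ) : ℝ)))
    · exact Eventually.of_forall fun n => g_nonneg c n hx
    · have hC3 : ∀ᶠ n : ℕ in atTop, (s₁ : ℝ) ≤ (n : ℝ) * δ :=
        (tendsto_natCast_atTop_atTop.atTop_mul_const hδ).eventually_ge_atTop _
      filter_upwards [eventually_ge_atTop (a + 1), hC3] with n hn hsn
      have hη0 : 0 < n - a := by omega
      have hηn : ((n - a : ℕ) : ℝ) ≤ n := by exact_mod_cast Nat.sub_le n a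
      have hηnn : (0:ℝ) ≤ ((n - a : ℕ) : ℝ) := by positivity
      rw [show g a s₁ c n x = ∑ k ∈ range (n - a + 1),
          (if c * n ≤ (k : ℝ) + s₁ then ((k : ℝ) + s₁) / n else 0) * W (n - a) k x from rfl,
        ← Finset.sum_filter_add_sum_filter_not (range (n - a + 1))
          (fun k : ℕ => δ * ((n - a : ℕ) : ℝ) ≤ |(k : ℝ) - ((n - a : ℕ) : ℝ) * x|)]
      have hnear : ∑ k ∈ (range (n - a + 1)).filter
          (fun k : ℕ => ¬ (δ * ((n - a : ℕ) : ℝ) ≤ |(k : ℝ) - ((n - a : ℕ) : ℝ) * x|)),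
          (if c * n ≤ (k : ℝ) + s₁ then ((k : ℝ) + s₁) / n else 0) * W (n - a) k x = 0 := by
        apply Finset.sum_eq_zero
        intro k hk
        rw [Finset.mem_filter] at hk
        have habs := abs_lt.mp (not_le.mp hk.2)
        have hklt : (k : ℝ) < ((n - a : ℕ) : ℝ) * x + δ * ((n - a : ℕ) : ℝ) := by
          linarith [habs.2]
        have hineq : ¬ (c * n ≤ (k : ℝ) + s₁) := by
          push_neg
          have h1 : ((n - a : ℕ) : ℝ) * x ≤ n * x := mul_le_mul_of_nonneg_right hηn hx.1
          have h2 : δ * ((n - a : ℕ) : ℝ) ≤ δ * n := mul_le_mul_of_nonneg_left hηn hδ.le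
          have hcx : c = x + 2 * δ := by rw [hδdef]; ring
          have hsn' : (s₁ : ℝ) ≤ δ * n := by linarith [hsn, mul_comm (n:ℝ) δ ▸ hsn]
          nlinarith [hsn']
        rw [if_neg hineq, zero_mul]
      rw [hnear, add_zero]
      calc ∑ k ∈ (range (n - a + 1)).filter
            (fun k : ℕ => δ * ((n - a : ℕ) : ℝ) ≤ |(k : ℝ) - ((n - a : ℕ) : ℝ) * x|),
            (if c * n ≤ (k : ℝ) + s₁ then ((k : ℝ) + s₁) / n else 0) * W (n - a) k x
          ≤ ∑ k ∈ (range (n - a + 1)).filter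
            (fun k : ℕ => δ * ((n - a : ℕ) : ℝ) ≤ |(k : ℝ) - ((n - a : ℕ) : ℝ) * x|),
            W (n - a) k x := by
            apply Finset.sum_le_sum
            intro k hk
            rw [Finset.mem_filter, Finset.mem_range] at hk
            have hk' : k ≤ n - a := Nat.lt_succ_iff.mp hk.1
            calc (if c * n ≤ (k : ℝ) + s₁ then ((k : ℝ) + s₁) / n else 0) * W (n - a) k x
                ≤ 1 * W (n - a) k x :=
                  mul_le_mul_of_nonneg_right (t_le_one hs hn hk') (W_nonneg hx)
              _ = W (n - a) k x := one_mul _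
        _ ≤ 1 / (δ ^ 2 * ((n - a : ℕ) : ℝ)) := W_cheb hη0 hx hδ
    · exact bound_tendsto a hδ
  · -- x > c, limit x
    rw [if_pos hgt.le]
    rw [Metric.tendsto_nhds]
    intro ε hε
    set δ := min (ε / 4) ((x - c) / 2) with hδdef
    have hδ : 0 < δ := lt_min (by linarith) (by linarith)
    have hδε : δ ≤ ε / 4 := min_le_left _ _
    have hδxc : δ ≤ (x - c) / 2 := min_le_right _ _
    have hE2 : ∀ᶠ n : ℕ in atTop, (a : ℝ) ≤ (n : ℝ) * ((x - c) / 2) :=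
      (tendsto_natCast_atTop_atTop.atTop_mul_const (by linarith)).eventually_ge_atTop _
    have hE3 : ∀ᶠ n : ℕ in atTop, (a : ℝ) + s₁ ≤ (n : ℝ) * δ :=
      (tendsto_natCast_atTop_atTop.atTop_mul_const hδ).eventually_ge_atTop _
    have hE4 : ∀ᶠ n : ℕ in atTop, 1 / (δ ^ 2 * ((n - a : ℕ) : ℝ)) ≤ ε / 4 :=
      (bound_tendsto a hδ).eventually (eventually_le_nhds (by linarith))
    filter_upwards [eventually_ge_atTop (a + 1), hE2, hE3, hE4] with n hn h2 h3 h4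
    rw [Real.dist_eq]
    have hη0 : 0 < n - a := by omega
    have hηr : ((n - a : ℕ) : ℝ) = (n : ℝ) - a := by
      push_cast [Nat.cast_sub (by omega : a ≤ n)]; ring
    have hηn : ((n - a : ℕ) : ℝ) ≤ n := by exact_mod_cast Nat.sub_le n a
    have hn0 : (0:ℝ) < n := by
      have : 0 < n := by omega
      exact_mod_cast this
    -- rewrite difference as a single sum
    have hgx : g a s₁ c n x - x = ∑ k ∈ range (n - a + 1),
        ((if c * n ≤ (k : ℝ) + s₁ then ((k : ℝ) + s₁) / n else 0) - x) * W (n - a) k x := by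
      have h1 : ∑ k ∈ range (n - a + 1),
          ((if c * n ≤ (k : ℝ) + s₁ then ((k : ℝ) + s₁) / n else 0) - x) * W (n - a) k x
          = (∑ k ∈ range (n - a + 1),
              (if c * n ≤ (k : ℝ) + s₁ then ((k : ℝ) + s₁) / n else 0) * W (n - a) k x)
            - x * ∑ k ∈ range (n - a + 1), W (n - a) k x := by
        rw [Finset.mul_sum, ← Finset.sum_sub_distrib]
        exact Finset.sum_congr rfl fun k _ => by ring
      rw [h1, W_sum, mul_one]; rfl
    rw [hgx]
    have habs : |∑ k ∈ range (n - a + 1),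
        ((if c * n ≤ (k : ℝ) + s₁ then ((k : ℝ) + s₁) / n else 0) - x) * W (n - a) k x|
        ≤ ∑ k ∈ range (n - a + 1),
        |(if c * n ≤ (k : ℝ) + s₁ then ((k : ℝ) + s₁) / n else 0) - x| * W (n - a) k x := by
      refine le_trans (Finset.abs_sum_le_sum_abs _ _) (le_of_eq ?_)
      exact Finset.sum_congr rfl fun k _ => by
        rw [abs_mul, abs_of_nonneg (W_nonneg hx)]
    refine lt_of_le_of_lt habs ?_
    rw [← Finset.sum_filter_add_sum_filter_not (range (n - a + 1))
      (fun k : ℕ => δ * ((n - a : ℕ) : ℝ) ≤ |(k : ℝ) - ((n - a : ℕ) : ℝ) * x|)]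
    have hfar : ∑ k ∈ (range (n - a + 1)).filter
        (fun k : ℕ => δ * ((n - a : ℕ) : ℝ) ≤ |(k : ℝ) - ((n - a : ℕ) : ℝ) * x|),
        |(if c * n ≤ (k : ℝ) + s₁ then ((k : ℝ) + s₁) / n else 0) - x| * W (n - a) k x
        ≤ 1 / (δ ^ 2 * ((n - a : ℕ) : ℝ)) := by
      refine le_trans (Finset.sum_le_sum ?_) (W_cheb hη0 hx hδ)
      intro k hk
      rw [Finset.mem_filter, Finset.mem_range] at hk
      have hk' : k ≤ n - a := Nat.lt_succ_iff.mp hk.1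
      have ht0 := t_nonneg s₁ c n k
      have ht1 := t_le_one (c := c) hs hn hk'
      have : |(if c * n ≤ (k : ℝ) + s₁ then ((k : ℝ) + s₁) / n else 0) - x| ≤ 1 :=
        abs_le.mpr ⟨by linarith [hx.2], by linarith [hx.1]⟩
      calc |(if c * n ≤ (k : ℝ) + s₁ then ((k : ℝ) + s₁) / n else 0) - x| * W (n - a) k x
          ≤ 1 * W (n - a) k x := mul_le_mul_of_nonneg_right this (W_nonneg hx)
        _ = W (n - a) k x := one_mul _
    have hnear : ∑ k ∈ (range (n - a + 1)).filter
        (fun k : ℕ => ¬ (δ * ((n - a : ℕ) : ℝ) ≤ |(k : ℝ) - ((n - a : ℕ) : ℝ) * x|)),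
        |(if c * n ≤ (k : ℝ) + s₁ then ((k : ℝ) + s₁) / n else 0) - x| * W (n - a) k x
        ≤ 2 * δ := by
      have step : ∀ k ∈ (range (n - a + 1)).filter
          (fun k : ℕ => ¬ (δ * ((n - a : ℕ) : ℝ) ≤ |(k : ℝ) - ((n - a : ℕ) : ℝ) * x|)),
          |(if c * n ≤ (k : ℝ) + s₁ then ((k : ℝ) + s₁) / n else 0) - x| * W (n - a) k x
          ≤ 2 * δ * W (n - a) k x := by
        intro k hk
        rw [Finset.mem_filter, Finset.mem_range] at hk
        have habs2 := abs_lt.mp (not_le.mp hk.2)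
        have hkgt : ((n - a : ℕ) : ℝ) * x - δ * ((n - a : ℕ) : ℝ) < k := by
          linarith [habs2.1]
        have hklt : (k : ℝ) < ((n - a : ℕ) : ℝ) * x + δ * ((n - a : ℕ) : ℝ) := by
          linarith [habs2.2]
        -- indicator is true
        have hax : (a : ℝ) * (x - δ) ≤ a := by
          have hxd1 : x - δ ≤ 1 := by linarith [hx.2]
          nlinarith [Nat.cast_nonneg (α := ℝ) a]
        have hxd0 : 0 ≤ x - δ := by linarith
        have hcond : c * n ≤ (k : ℝ) + s₁ := by
          have key : c * n ≤ ((n - a : ℕ) : ℝ) * (x - δ) := by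
            rw [hηr]
            have hnd : (n : ℝ) * δ ≤ (n : ℝ) * ((x - c) / 2) :=
              mul_le_mul_of_nonneg_left hδxc hn0.le
            nlinarith
          have : ((n - a : ℕ) : ℝ) * (x - δ) ≤ k := by nlinarith
          have hs1 : (0:ℝ) ≤ s₁ := by positivity
          linarith
        rw [if_pos hcond]
        have hδη : δ * ((n - a : ℕ) : ℝ) ≤ δ * n := mul_le_mul_of_nonneg_left hηn hδ.le
        rw [hηr] at hklt hkgt hδη
        have hax0 : 0 ≤ (a : ℝ) * x := mul_nonneg (Nat.cast_nonneg a) hx.1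
        have hax2 : (a : ℝ) * x ≤ a := by
          nlinarith [hx.2, Nat.cast_nonneg (α := ℝ) a]
        have hδa0 : 0 ≤ δ * (a : ℝ) := mul_nonneg hδ.le (Nat.cast_nonneg a)
        have hs10 : (0:ℝ) ≤ s₁ := by positivity
        have hbd : |((k : ℝ) + s₁) / n - x| ≤ 2 * δ := by
          have hup : ((k : ℝ) + s₁) / n ≤ x + 2 * δ := by
            rw [div_le_iff₀ hn0]
            nlinarith [hklt, h3, hax0, hδa0]
          have hlow : x - 2 * δ ≤ ((k : ℝ) + s₁) / n := by
            rw [le_div_iff₀ hn0]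
            nlinarith [hkgt, h3, hax2, hδa0, hs10]
          rw [abs_le]
          constructor <;> linarith
        exact mul_le_mul_of_nonneg_right hbd (W_nonneg hx)
      calc ∑ k ∈ (range (n - a + 1)).filter
            (fun k : ℕ => ¬ (δ * ((n - a : ℕ) : ℝ) ≤ |(k : ℝ) - ((n - a : ℕ) : ℝ) * x|)),
            |(if c * n ≤ (k : ℝ) + s₁ then ((k : ℝ) + s₁) / n else 0) - x| * W (n - a) k x
          ≤ ∑ k ∈ (range (n - a + 1)).filter
            (fun k : ℕ => ¬ (δ * ((n - a : ℕ) : ℝ) ≤ |(k : ℝ) - ((n - a : ℕ) : ℝ) * x|)),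
            2 * δ * W (n - a) k x := Finset.sum_le_sum step
        _ ≤ ∑ k ∈ range (n - a + 1), 2 * δ * W (n - a) k x := by
            apply Finset.sum_le_sum_of_subset_of_nonneg (Finset.filter_subset _ _)
            intro k _ _
            exact mul_nonneg (by positivity) (W_nonneg hx)
        _ = 2 * δ := by rw [← Finset.mul_sum, W_sum, mul_one]
    calc _ ≤ 1 / (δ ^ 2 * ((n - a : ℕ) : ℝ)) + 2 * δ := add_le_add hfar hnear
      _ ≤ ε / 4 + 2 * (ε / 4) := add_le_add h4 (by linarith)
      _ < ε := by linarith



lemma W_comp_integrable {Ω : Type*} [MeasurableSpace Ω] (ℙ : Measure Ω) [IsProbabilityMeasure ℙ]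
    (V : Ω → ℝ) (hVmeas : Measurable V) (hV01 : ∀ ω, V ω ∈ Set.Icc (0:ℝ) 1)
    (m k : ℕ) : Integrable (fun ω => W m k (V ω)) ℙ := by
  have hcont : Continuous (fun x : ℝ => W m k x) := by
    unfold W; fun_prop
  refine ⟨(hcont.measurable.comp hVmeas).aestronglyMeasurable, ?_⟩
  apply HasFiniteIntegral.of_bounded (C := (m.choose k : ℝ))
  apply ae_of_all
  intro ω
  have hx := hV01 ω
  rw [Real.norm_eq_abs, abs_of_nonneg (W_nonneg hx)]
  unfold W
  have h1 : V ω ^ k ≤ 1 := pow_le_one₀ hx.1 hx.2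
  have h2 : (1 - V ω) ^ (m - k) ≤ 1 := pow_le_one₀ (by linarith [hx.2]) (by linarith [hx.1])
  have h3 : 0 ≤ V ω ^ k := pow_nonneg hx.1 k
  have h4 : 0 ≤ (1 - V ω) ^ (m - k) := pow_nonneg (by linarith [hx.2]) _
  have hC : (0:ℝ) ≤ (m.choose k : ℝ) := Nat.cast_nonneg _
  calc (m.choose k : ℝ) * V ω ^ k * (1 - V ω) ^ (m - k)
      ≤ (m.choose k : ℝ) * V ω ^ k * 1 :=
        mul_le_mul_of_nonneg_left h2 (mul_nonneg hC h3)
    _ = (m.choose k : ℝ) * V ω ^ k := mul_one _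
    _ ≤ (m.choose k : ℝ) * 1 := mul_le_mul_of_nonneg_left h1 hC
    _ = (m.choose k : ℝ) := mul_one _

set_option maxHeartbeats 1000000 in
lemma key_identity {Ω : Type*} [MeasurableSpace Ω] (ℙ : Measure Ω) [IsProbabilityMeasure ℙ]
    (V : Ω → ℝ) (hVmeas : Measurable V) (hV01 : ∀ ω, V ω ∈ Set.Icc (0:ℝ) 1)
    (a s₁ : ℕ) (c : ℝ) (n : ℕ) (Iₙ : Ω → ℕ) (hImeas : Measurable Iₙ)
    (hdist : ∀ k : ℕ, k ≤ n - a → (ℙ {ω | Iₙ ω = k + s₁}).toReal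
        = ∫ ω, W (n - a) k (V ω) ∂ℙ) :
    ∫ ω, (if c * n ≤ (Iₙ ω : ℝ) then (Iₙ ω : ℝ) / n else 0) ∂ℙ
      = ∫ ω, g a s₁ c n (V ω) ∂ℙ := by
  set η := n - a with hηdef
  set f : ℕ → ℝ := fun m => if c * n ≤ (m : ℝ) then (m : ℝ) / n else 0 with hfdef
  have hSm : ∀ k : ℕ, MeasurableSet {ω | Iₙ ω = k + s₁} := fun k =>
    hImeas (measurableSet_singleton (k + s₁))
  have hWint : ∀ k : ℕ, Integrable (fun ω => W η k (V ω)) ℙ := fun k =>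
    W_comp_integrable ℙ V hVmeas hV01 η k
  -- total mass
  have hsum1 : ∑ k ∈ range (η + 1), (ℙ {ω | Iₙ ω = k + s₁}).toReal = 1 := by
    have h1 : ∑ k ∈ range (η + 1), (ℙ {ω | Iₙ ω = k + s₁}).toReal
        = ∑ k ∈ range (η + 1), ∫ ω, W η k (V ω) ∂ℙ :=
      Finset.sum_congr rfl fun k hk => hdist k (Nat.lt_succ_iff.mp (Finset.mem_range.mp hk))
    rw [h1, ← integral_finset_sum _ (fun k _ => hWint k)]
    have : ∀ ω, ∑ k ∈ range (η + 1), W η k (V ω) = 1 := fun ω => W_sum η (V ω)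
    simp only [this]
    simp
  -- the union has full measure
  set U : Set Ω := ⋃ k ∈ range (η + 1), {ω | Iₙ ω = k + s₁} with hUdef
  have hUm : MeasurableSet U := MeasurableSet.biUnion (Finset.range (η+1)).countable_toSet
    (fun k _ => hSm k)
  have hdisj : ((range (η + 1) : Finset ℕ) : Set ℕ).PairwiseDisjoint
      (fun k => {ω | Iₙ ω = k + s₁}) := by
    intro i _ j _ hij
    simp only [Function.onFun, Set.disjoint_left]
    intro ω h1 h2
    simp only [Set.mem_setOf_eq] at h1 h2
    exact hij (by omega : i = j)
  have hU1 : ℙ U = 1 := by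
    rw [hUdef, measure_biUnion_finset hdisj (fun k _ => hSm k)]
    rw [← ENNReal.toReal_eq_one_iff]
    rw [ENNReal.toReal_sum (fun k _ => measure_ne_top ℙ _)]
    exact hsum1
  have hUc : ℙ Uᶜ = 0 := by
    rw [measure_compl hUm (measure_ne_top ℙ U), hU1, measure_univ, tsub_self]
  -- a.e. equality with a simple-function representation
  have haeeq : (fun ω => f (Iₙ ω)) =ᵐ[ℙ] (fun ω => ∑ k ∈ range (η + 1),
      Set.indicator {ω' | Iₙ ω' = k + s₁} (fun _ => f (k + s₁)) ω) := by
    have hUae : U ∈ ae ℙ := mem_ae_iff.mpr hUc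
    filter_upwards [hUae] with ω hω
    rw [hUdef] at hω
    simp only [Set.mem_iUnion, Finset.mem_coe] at hω
    obtain ⟨k₀, hk₀mem, hk₀⟩ := hω
    have hk₀' : Iₙ ω = k₀ + s₁ := hk₀
    rw [Finset.sum_eq_single_of_mem k₀ (by simpa using hk₀mem)]
    · rw [Set.indicator_of_mem hk₀, hk₀']
    · intro j _ hj
      apply Set.indicator_of_notMem
      simp only [Set.mem_setOf_eq, hk₀']
      omega
  -- compute the integral
  have hIF : ∫ ω, f (Iₙ ω) ∂ℙ = ∑ k ∈ range (η + 1), f (k + s₁) * (ℙ {ω | Iₙ ω = k + s₁}).toReal := by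
    rw [integral_congr_ae haeeq]
    rw [integral_finset_sum _ (fun k _ => (integrable_const (f (k + s₁))).indicator (hSm k))]
    refine Finset.sum_congr rfl fun k _ => ?_
    rw [integral_indicator_const _ (hSm k), smul_eq_mul, mul_comm, measureReal_def]
  calc ∫ ω, (if c * n ≤ (Iₙ ω : ℝ) then (Iₙ ω : ℝ) / n else 0) ∂ℙ
      = ∫ ω, f (Iₙ ω) ∂ℙ := rfl
    _ = ∑ k ∈ range (η + 1), f (k + s₁) * (ℙ {ω | Iₙ ω = k + s₁}).toReal := hIF
    _ = ∑ k ∈ range (η + 1), ∫ ω, f (k + s₁) * W η k (V ω) ∂ℙ := by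
        refine Finset.sum_congr rfl fun k hk => ?_
        rw [hdist k (Nat.lt_succ_iff.mp (Finset.mem_range.mp hk)), ← integral_const_mul]
    _ = ∫ ω, ∑ k ∈ range (η + 1), f (k + s₁) * W η k (V ω) ∂ℙ := by
        rw [← integral_finset_sum _ (fun k _ => (hWint k).const_mul _)]
    _ = ∫ ω, g a s₁ c n (V ω) ∂ℙ := by
        refine integral_congr_ae (ae_of_all _ fun ω => ?_)
        unfold g
        refine Finset.sum_congr rfl fun k _ => ?_
        congr 1
        rw [hfdef]
        push_cast
        rfl



lemma g_continuous (a s₁ : ℕ) (c : ℝ) (n : ℕ) : Continuous (fun x => g a s₁ c n x) := by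
  unfold g W
  fun_prop



end Stmt15Aux


/-- For every `y ∈ ℝ`,
`b·E[(I_n/n)·1{I_n ≥ e^{-y}·n}] + (s₀/n)·1{n-s₀ ≥ e^{-y}·n} → b·E[V·1{V ≥ e^{-y}}]`
as `n → ∞`: the transition distribution functions of the associated Markov chain converge
pointwise to `F(y) = b·E[V·1{-log V ≤ y}]`. -/
theorem stmt15
    (b s₀ s₁ : ℕ) (hb : 2 ≤ b)
    {Ω : Type*} [MeasurableSpace Ω] (ℙ : Measure Ω) [IsProbabilityMeasure ℙ]
    (V : Ω → ℝ) (hVmeas : Measurable V)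
    (hV01 : ∀ ω, V ω ∈ Set.Icc (0:ℝ) 1)
    (hVdens : ℙ.map V ≪ (volume : Measure ℝ))
    (hVtail : ∀ x : ℝ, x < 1 → ℙ {ω | V ω ≤ x} < 1)
    (hEV : (∫ ω, V ω ∂ℙ) = 1 / b)
    (I : ℕ → Ω → ℕ) (hImeas : ∀ n, Measurable (I n))
    (hIdist : ∀ n : ℕ, s₀ + b * s₁ ≤ n → ∀ k : ℕ, k ≤ n - s₀ - b * s₁ →
      (ℙ {ω | I n ω = k + s₁}).toReal
        = ∫ ω, ((n - s₀ - b * s₁).choose k : ℝ) * V ω ^ k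
            * (1 - V ω) ^ (n - s₀ - b * s₁ - k) ∂ℙ) :
    ∀ y : ℝ,
      Tendsto (fun n : ℕ =>
          (b : ℝ) * (∫ ω, (if Real.exp (-y) * n ≤ (I n ω : ℝ) then (I n ω : ℝ) / n else 0) ∂ℙ)
            + ((s₀ : ℝ) / n) * (if Real.exp (-y) * n ≤ (n : ℝ) - s₀ then 1 else 0))
        atTop
        (𝓝 ((b : ℝ) * ∫ ω, (if Real.exp (-y) ≤ V ω then V ω else 0) ∂ℙ)) := by
  intro y
  set c : ℝ := Real.exp (-y) with hcdef
  have hc : 0 < c := Real.exp_pos _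
  set a : ℕ := s₀ + b * s₁ with hadef
  have hs : s₁ ≤ a := by
    have h1 : s₁ ≤ b * s₁ := Nat.le_mul_of_pos_left s₁ (by omega)
    omega
  -- a.e. V ≠ c
  have hVc : ∀ᵐ ω ∂ℙ, V ω ≠ c := by
    have h0 : ℙ.map V {c} = 0 := hVdens (Real.volume_singleton)
    rw [Measure.map_apply hVmeas (measurableSet_singleton c)] at h0
    rw [ae_iff]
    convert h0 using 2
    ext ω
    simp
  -- dominated convergence for the g-integrals
  have hint : Tendsto (fun n : ℕ => ∫ ω, Stmt15Aux.g a s₁ c n (V ω) ∂ℙ) atTop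
      (𝓝 (∫ ω, (if c ≤ V ω then V ω else 0) ∂ℙ)) := by
    apply tendsto_integral_of_dominated_convergence (bound := fun _ => 1 + (s₁ : ℝ))
    · exact fun n => ((Stmt15Aux.g_continuous a s₁ c n).measurable.comp hVmeas).aestronglyMeasurable
    · exact integrable_const _
    · intro n
      apply ae_of_all
      intro ω
      rw [Real.norm_eq_abs]
      exact Stmt15Aux.g_bound c n (hV01 ω)
    · filter_upwards [hVc] with ω hω
      exact Stmt15Aux.g_tendsto hs hc (hV01 ω) hω
  -- identify the integrals for large n
  have heq : ∀ᶠ n : ℕ in atTop,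
      ∫ ω, (if c * n ≤ (I n ω : ℝ) then (I n ω : ℝ) / n else 0) ∂ℙ
        = ∫ ω, Stmt15Aux.g a s₁ c n (V ω) ∂ℙ := by
    filter_upwards [eventually_ge_atTop a] with n hn
    apply Stmt15Aux.key_identity ℙ V hVmeas hV01 a s₁ c n (I n) (hImeas n)
    intro k hk
    have h2 : n - s₀ - b * s₁ = n - a := by omega
    have := hIdist n hn k (by omega)
    rw [h2] at this
    exact this
  have hfirst : Tendsto (fun n : ℕ =>
      ∫ ω, (if c * n ≤ (I n ω : ℝ) then (I n ω : ℝ) / n else 0) ∂ℙ) atTop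
      (𝓝 (∫ ω, (if c ≤ V ω then V ω else 0) ∂ℙ)) :=
    hint.congr' (EventuallyEq.symm heq)
  have hsecond : Tendsto (fun n : ℕ =>
      ((s₀ : ℝ) / n) * (if c * n ≤ (n : ℝ) - s₀ then 1 else 0)) atTop (𝓝 0) := by
    apply squeeze_zero (g := fun n : ℕ => (s₀ : ℝ) / n)
    · intro n
      apply mul_nonneg (by positivity)
      split <;> norm_num
    · intro n
      calc ((s₀ : ℝ) / n) * (if c * n ≤ (n : ℝ) - s₀ then 1 else 0)
          ≤ ((s₀ : ℝ) / n) * 1 := by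
            apply mul_le_mul_of_nonneg_left _ (by positivity)
            split <;> norm_num
        _ = (s₀ : ℝ) / n := mul_one _
    · exact tendsto_const_div_atTop_nhds_zero_nat _
  have := (hfirst.const_mul (b : ℝ)).add hsecond
  simpa using this
end

section
/- For every x ∈ (0,1) one has x²·(1 − x + x² + (1−x)·√(x²+1)) < x. Consequently, if V is a random variable with values in [0,1] such that E[V] = 1/b and P(V ∈ {0,1}) = 0, then E[V²·(1 − V + V² + (1−V)·√(V²+1))] < 1/b. -/
open MeasureTheory Filter Topology Asymptotics

private lemma stmt18_sqrt_le (x : ℝ) (hx0 : 0 ≤ x) :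
    Real.sqrt (x ^ 2 + 1) ≤ x + 1 := by
  have h : x ^ 2 + 1 ≤ (x + 1) ^ 2 := by nlinarith
  calc Real.sqrt (x ^ 2 + 1) ≤ Real.sqrt ((x + 1) ^ 2) := Real.sqrt_le_sqrt h
    _ = x + 1 := Real.sqrt_sq (by linarith)

private lemma stmt18_strict (x : ℝ) (hx : x ∈ Set.Ioo (0:ℝ) 1) :
    x ^ 2 * (1 - x + x ^ 2 + (1 - x) * Real.sqrt (x ^ 2 + 1)) < x := by
  obtain ⟨hx0, hx1⟩ := hx
  set s := Real.sqrt (x ^ 2 + 1) with hs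
  have hsle : s ≤ x + 1 := stmt18_sqrt_le x hx0.le
  have h2 : 0 ≤ x ^ 2 * (1 - x) * (x + 1 - s) :=
    mul_nonneg (mul_nonneg (sq_nonneg x) (by linarith)) (by linarith)
  have h3 : 0 < x * (x - 1) ^ 2 :=
    mul_pos hx0 (pow_two_pos_of_ne_zero (sub_ne_zero.mpr (by linarith : x ≠ 1)))
  nlinarith [h2, h3]

private lemma stmt18_le (x : ℝ) (hx : x ∈ Set.Icc (0:ℝ) 1) :
    x ^ 2 * (1 - x + x ^ 2 + (1 - x) * Real.sqrt (x ^ 2 + 1)) ≤ x := by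
  obtain ⟨hx0, hx1⟩ := hx
  set s := Real.sqrt (x ^ 2 + 1) with hs
  have hsle : s ≤ x + 1 := stmt18_sqrt_le x hx0
  have h2 : 0 ≤ x ^ 2 * (1 - x) * (x + 1 - s) :=
    mul_nonneg (mul_nonneg (sq_nonneg x) (by linarith)) (by linarith)
  have h3 : 0 ≤ x * (x - 1) ^ 2 := mul_nonneg hx0 (sq_nonneg _)
  nlinarith [h2, h3]

private lemma stmt18_nonneg (x : ℝ) (hx : x ∈ Set.Icc (0:ℝ) 1) :
    0 ≤ x ^ 2 * (1 - x + x ^ 2 + (1 - x) * Real.sqrt (x ^ 2 + 1)) := by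
  obtain ⟨hx0, hx1⟩ := hx
  have hs : 0 ≤ Real.sqrt (x ^ 2 + 1) := Real.sqrt_nonneg _
  have : 0 ≤ (1 - x) * Real.sqrt (x ^ 2 + 1) := mul_nonneg (by linarith) hs
  nlinarith [sq_nonneg x]

/-- For every `x ∈ (0,1)` one has
`x²·(1 - x + x² + (1-x)·√(x²+1)) < x` (the left-hand side is the larger eigenvalue of
`(A_x)ᵀ A_x` for `A_x = [[x², x(1-x)], [0, x]]`). Consequently, if `V` is a random variable
with values in `[0,1]`, `E[V] = 1/b` and `P(V ∈ {0,1}) = 0`, then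
`E[V²·(1 - V + V² + (1-V)·√(V²+1))] < 1/b`. -/
theorem stmt18 (b : ℕ) (hb : 2 ≤ b) :
    (∀ x ∈ Set.Ioo (0:ℝ) 1,
        x ^ 2 * (1 - x + x ^ 2 + (1 - x) * Real.sqrt (x ^ 2 + 1)) < x)
    ∧ ∀ (Ω : Type) (mΩ : MeasurableSpace Ω) (ℙ : @Measure Ω mΩ),
        IsProbabilityMeasure ℙ →
        ∀ V : Ω → ℝ, Measurable V → (∀ ω, V ω ∈ Set.Icc (0:ℝ) 1) →
        (∫ ω, V ω ∂ℙ) = 1 / (b:ℝ) →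
        ℙ {ω | V ω = 0 ∨ V ω = 1} = 0 →
        (∫ ω, (V ω) ^ 2 * (1 - V ω + (V ω) ^ 2
            + (1 - V ω) * Real.sqrt ((V ω) ^ 2 + 1)) ∂ℙ) < 1 / (b:ℝ) := by
  refine ⟨fun x hx => stmt18_strict x hx, ?_⟩
  intro Ω mΩ ℙ hPP V hVmeas hVrange hVmean hVnull
  set f : ℝ → ℝ := fun x => x ^ 2 * (1 - x + x ^ 2 + (1 - x) * Real.sqrt (x ^ 2 + 1)) with hf
  have hfmeas : Measurable fun ω => f (V ω) := by
    apply Measurable.mul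
    · exact (hVmeas.pow_const 2)
    · apply Measurable.add
      · apply Measurable.add
        · exact (measurable_const.sub hVmeas)
        · exact (hVmeas.pow_const 2)
      · exact (measurable_const.sub hVmeas).mul
          (((hVmeas.pow_const 2).add measurable_const).sqrt)
  have hbound : ∀ ω, ‖f (V ω)‖ ≤ 1 := by
    intro ω
    rw [Real.norm_eq_abs, abs_of_nonneg (stmt18_nonneg _ (hVrange ω))]
    exact le_trans (stmt18_le _ (hVrange ω)) (hVrange ω).2
  have hInt_f : Integrable (fun ω => f (V ω)) ℙ :=
    (integrable_const (1:ℝ)).mono' hfmeas.aestronglyMeasurable (ae_of_all _ hbound)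
  have hInt_V : Integrable V ℙ := by
    refine (integrable_const (1:ℝ)).mono' hVmeas.aestronglyMeasurable (ae_of_all _ ?_)
    intro ω
    rw [Real.norm_eq_abs, abs_of_nonneg (hVrange ω).1]
    exact (hVrange ω).2
  -- g ω = V ω − f (V ω)
  have hg_nonneg : ∀ ω, 0 ≤ V ω - f (V ω) := fun ω =>
    sub_nonneg.mpr (stmt18_le _ (hVrange ω))
  have hg_int : Integrable (fun ω => V ω - f (V ω)) ℙ := hInt_V.sub hInt_f
  have hpos : 0 < ∫ ω, (V ω - f (V ω)) ∂ℙ := by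
    rw [integral_pos_iff_support_of_nonneg_ae (ae_of_all _ hg_nonneg) hg_int]
    have hsub : {ω | V ω = 0 ∨ V ω = 1}ᶜ ⊆ Function.support (fun ω => V ω - f (V ω)) := by
      intro ω hω
      simp only [Set.mem_compl_iff, Set.mem_setOf_eq, not_or] at hω
      have hmem : V ω ∈ Set.Ioo (0:ℝ) 1 :=
        ⟨lt_of_le_of_ne (hVrange ω).1 (Ne.symm hω.1),
         lt_of_le_of_ne (hVrange ω).2 hω.2⟩
      have := stmt18_strict _ hmem
      simp only [Function.mem_support]
      intro h
      have : V ω - f (V ω) > 0 := sub_pos.mpr this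
      linarith [h ▸ this]
    have hcompl : ℙ {ω | V ω = 0 ∨ V ω = 1}ᶜ = 1 := by
      rw [prob_compl_eq_one_sub₀ (MeasureTheory.NullMeasurableSet.of_null hVnull), hVnull]
      simp
    calc (0:ENNReal) < 1 := by norm_num
      _ = ℙ {ω | V ω = 0 ∨ V ω = 1}ᶜ := hcompl.symm
      _ ≤ ℙ (Function.support (fun ω => V ω - f (V ω))) := measure_mono hsub
  rw [integral_sub hInt_V hInt_f, hVmean] at hpos
  linarith
end

section
/- For every fixed l ∈ ℕ, P({I_n ≤ l} ∪ {I_n = n}) → 0 as n → ∞. -/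
open MeasureTheory Filter Topology Asymptotics

lemma aux_binom_sum (x : ℝ) (m : ℕ) :
    ∑ k ∈ Finset.range (m+1), (m.choose k : ℝ) * x^k * (1-x)^(m-k) = 1 := by
  have h := add_pow x (1-x) m
  have hx : x + (1-x) = 1 := by ring
  rw [hx, one_pow] at h
  rw [show (∑ k ∈ Finset.range (m+1), (m.choose k : ℝ) * x^k * (1-x)^(m-k))
      = ∑ k ∈ Finset.range (m+1), x^k * (1-x)^(m-k) * (m.choose k : ℝ) from
    Finset.sum_congr rfl (fun k _ => by ring), ← h]

lemma aux_term_nonneg {x : ℝ} (hx : x ∈ Set.Icc (0:ℝ) 1) (m k : ℕ) :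
    0 ≤ (m.choose k : ℝ) * x^k * (1-x)^(m-k) := by
  obtain ⟨h0, h1⟩ := hx
  have := pow_nonneg h0 k
  have := pow_nonneg (by linarith : (0:ℝ) ≤ 1 - x) (m-k)
  positivity

lemma aux_term_le_one {x : ℝ} (hx : x ∈ Set.Icc (0:ℝ) 1) (m k : ℕ) :
    (m.choose k : ℝ) * x^k * (1-x)^(m-k) ≤ 1 := by
  rcases le_or_gt k m with h | h
  · nth_rewrite 2 [← aux_binom_sum x m]
    exact Finset.single_le_sum (fun i _ => aux_term_nonneg hx m i)
      (Finset.mem_range.2 (Nat.lt_succ_of_le h))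
  · simp [Nat.choose_eq_zero_of_lt h]

lemma aux_ptwise {x : ℝ} (hx0 : 0 < x) (hx1 : x < 1) (k : ℕ) :
    Tendsto (fun m : ℕ => (m.choose k : ℝ) * x^k * (1-x)^(m-k)) atTop (𝓝 0) := by
  have h1x0 : (0:ℝ) < 1 - x := by linarith
  have h1x1 : 1 - x < 1 := by linarith
  have hr : 1 < (1-x)⁻¹ := one_lt_inv_iff₀.2 ⟨h1x0, h1x1⟩
  have hmain : Tendsto (fun m : ℕ => (m:ℝ)^k * (1-x)^(m-k)) atTop (𝓝 0) := by
    have h₂ := (tendsto_pow_const_div_const_pow_of_one_lt k hr).mul_const ((1-x)⁻¹ ^ k)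
    rw [zero_mul] at h₂
    apply h₂.congr'
    filter_upwards [eventually_ge_atTop k] with m hm
    rw [pow_sub₀ _ h1x0.ne' hm]
    field_simp
    rw [mul_assoc, mul_assoc, ← mul_pow (1 / (1 - x)) (1 - x) k, ← mul_pow (1 / (1 - x)) (1 - x) m, one_div, inv_mul_cancel₀ h1x0.ne', one_pow, one_pow]
  apply squeeze_zero (fun m => aux_term_nonneg ⟨hx0.le, hx1.le⟩ m k) _ hmain
  intro m
  have h1 : (m.choose k : ℝ) * x^k ≤ (m:ℝ)^k := by
    calc (m.choose k : ℝ) * x^k ≤ (m:ℝ)^k * 1 := by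
          apply mul_le_mul _ (pow_le_one₀ hx0.le hx1.le) (pow_nonneg hx0.le k) (by positivity)
          exact_mod_cast Nat.choose_le_pow m k
      _ = (m:ℝ)^k := mul_one _
  exact mul_le_mul_of_nonneg_right h1 (pow_nonneg h1x0.le _)

lemma aux_sum_insert_le {f : ℕ → ℝ} (hf : ∀ k, 0 ≤ f k) (a : ℕ) (s : Finset ℕ) :
    ∑ k ∈ insert a s, f k ≤ f a + ∑ k ∈ s, f k := by
  by_cases h : a ∈ s
  · rw [Finset.insert_eq_self.2 h]
    have := hf a; linarith
  · rw [Finset.sum_insert h]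

/-- For every fixed `l ∈ ℕ`, `P({I_n ≤ l} ∪ {I_n = n}) → 0` as `n → ∞`,
where `I n` is the size of the first subtree of a random split tree with `n` balls. -/
theorem stmt19
    (b s₀ s₁ : ℕ) (hb : 2 ≤ b)
    {Ω : Type*} [MeasurableSpace Ω] (ℙ : Measure Ω) [IsProbabilityMeasure ℙ]
    (V : Ω → ℝ) (hVmeas : Measurable V)
    (hV01 : ∀ ω, V ω ∈ Set.Icc (0:ℝ) 1)
    (hVdens : ℙ.map V ≪ (volume : Measure ℝ))
    (hVtail : ∀ x : ℝ, x < 1 → ℙ {ω | V ω ≤ x} < 1)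
    (hEV : (∫ ω, V ω ∂ℙ) = 1 / b)
    (I : ℕ → Ω → ℕ) (hImeas : ∀ n, Measurable (I n))
    (hIdist : ∀ n : ℕ, s₀ + b * s₁ ≤ n → ∀ k : ℕ, k ≤ n - s₀ - b * s₁ →
      (ℙ {ω | I n ω = k + s₁}).toReal
        = ∫ ω, ((n - s₀ - b * s₁).choose k : ℝ) * V ω ^ k
            * (1 - V ω) ^ (n - s₀ - b * s₁ - k) ∂ℙ) :
    ∀ l : ℕ, Tendsto (fun n : ℕ => ℙ {ω | I n ω ≤ l ∨ I n ω = n}) atTop (𝓝 0) := by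
  intro l
  -- a.e. V ∈ (0,1)
  have h01null : ℙ {ω | V ω = 0 ∨ V ω = 1} = 0 := by
    have hset : {ω | V ω = 0 ∨ V ω = 1} = V ⁻¹' {0, 1} := by
      ext ω; simp
    have hvol : (volume : Measure ℝ) ({0, 1} : Set ℝ) = 0 :=
      ((Set.finite_singleton (1:ℝ)).insert 0).measure_zero _
    rw [hset, ← Measure.map_apply hVmeas (by measurability)]
    exact hVdens hvol
  have hae : ∀ᵐ ω ∂ℙ, 0 < V ω ∧ V ω < 1 := by
    rw [ae_iff]
    refine measure_mono_null ?_ h01null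
    intro ω hω
    obtain ⟨h0, h1⟩ := hV01 ω
    simp only [Set.mem_setOf_eq, not_and_or, not_lt] at hω ⊢
    rcases hω with h | h
    · exact Or.inl (le_antisymm h h0)
    · exact Or.inr (le_antisymm h1 h)
  -- the basic integrals
  set G : ℕ → ℕ → ℝ := fun k m =>
    ∫ ω, (m.choose k : ℝ) * V ω ^ k * (1 - V ω) ^ (m - k) ∂ℙ with hG
  have hGmeas : ∀ k m : ℕ, Measurable fun ω =>
      (m.choose k : ℝ) * V ω ^ k * (1 - V ω) ^ (m - k) :=
    fun k m => (measurable_const.mul (hVmeas.pow_const k)).mul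
      ((measurable_const.sub hVmeas).pow_const _)
  have hbound1 : ∀ k m : ℕ, ∀ ω, ‖(m.choose k : ℝ) * V ω ^ k * (1 - V ω) ^ (m - k)‖ ≤ 1 := by
    intro k m ω
    rw [Real.norm_eq_abs, abs_of_nonneg (aux_term_nonneg (hV01 ω) m k)]
    exact aux_term_le_one (hV01 ω) m k
  have hInt : ∀ k m : ℕ, Integrable
      (fun ω => (m.choose k : ℝ) * V ω ^ k * (1 - V ω) ^ (m - k)) ℙ :=
    fun k m => (integrable_const 1).mono' (hGmeas k m).aestronglyMeasurable
      (Eventually.of_forall (hbound1 k m))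
  have hGnonneg : ∀ k m : ℕ, 0 ≤ G k m :=
    fun k m => integral_nonneg fun ω => aux_term_nonneg (hV01 ω) m k
  -- each fixed-k term tends to 0
  have hGk : ∀ k : ℕ, Tendsto (fun m => G k m) atTop (𝓝 0) := by
    intro k
    have := tendsto_integral_of_dominated_convergence (μ := ℙ)
      (F := fun m ω => (m.choose k : ℝ) * V ω ^ k * (1 - V ω) ^ (m - k))
      (f := fun _ => (0:ℝ)) (bound := fun _ => (1:ℝ))
      (fun m => (hGmeas k m).aestronglyMeasurable) (integrable_const 1)
      (fun m => Eventually.of_forall (hbound1 k m))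
      (hae.mono fun ω hω => aux_ptwise hω.1 hω.2 k)
    simpa using this
  -- the diagonal term tends to 0
  have hH : Tendsto (fun m => G m m) atTop (𝓝 0) := by
    have hGd : ∀ m, G m m = ∫ ω, V ω ^ m ∂ℙ := by
      intro m
      simp [hG, Nat.choose_self, Nat.sub_self]
    rw [show (fun m => G m m) = fun m => ∫ ω, V ω ^ m ∂ℙ from funext hGd]
    have := tendsto_integral_of_dominated_convergence (μ := ℙ)
      (F := fun m ω => V ω ^ m) (f := fun _ => (0:ℝ)) (bound := fun _ => (1:ℝ))
      (fun m => (hVmeas.pow_const m).aestronglyMeasurable) (integrable_const 1)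
      (fun m => Eventually.of_forall fun ω => by
        obtain ⟨h0, h1⟩ := hV01 ω
        rw [Real.norm_eq_abs, abs_of_nonneg (pow_nonneg h0 m)]
        exact pow_le_one₀ h0 h1)
      (hae.mono fun ω hω =>
        tendsto_pow_atTop_nhds_zero_of_lt_one hω.1.le hω.2)
    simpa using this
  -- the dominating bound
  set B : ℕ → ℝ := fun n =>
    (∑ k ∈ Finset.range (l+1), G k (n - s₀ - b * s₁)) + G (n - s₀ - b * s₁) (n - s₀ - b * s₁)
    with hB
  have hBtendsto : Tendsto B atTop (𝓝 0) := by
    have hη : Tendsto (fun n : ℕ => n - s₀ - b * s₁) atTop atTop :=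
      (tendsto_sub_atTop_nat (b * s₁)).comp (tendsto_sub_atTop_nat s₀)
    have hF : Tendsto (fun m => (∑ k ∈ Finset.range (l+1), G k m) + G m m) atTop (𝓝 0) := by
      have hs := tendsto_finset_sum (Finset.range (l+1)) (fun k _ => hGk k)
      simpa using hs.add hH
    exact hF.comp hη
  -- key estimate
  have hkey : ∀ n : ℕ, s₀ + b * s₁ ≤ n →
      (ℙ {ω | I n ω ≤ l ∨ I n ω = n}).toReal ≤ B n := by
    intro n hn
    set m : ℕ := n - s₀ - b * s₁ with hm
    set A : ℕ → Set Ω := fun k => {ω | I n ω = k + s₁} with hA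
    have hAmeas : ∀ k, MeasurableSet (A k) :=
      fun k => hImeas n (measurableSet_singleton (k + s₁))
    have hAval : ∀ k ≤ m, (ℙ (A k)).toReal = G k m := fun k hk => hIdist n hn k hk
    have hdisj : (↑(Finset.range (m+1)) : Set ℕ).Pairwise (Function.onFun Disjoint A) := by
      intro i _ j _ hij
      rw [Function.onFun, Set.disjoint_left]
      intro ω hi hj
      have h1 : I n ω = i + s₁ := hi
      have h2 : I n ω = j + s₁ := hj
      exact hij (by omega : i = j)
    have hUall : ℙ (⋃ k ∈ Finset.range (m+1), A k) = 1 := by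
      rw [measure_biUnion_finset hdisj (fun k _ => hAmeas k)]
      refine ENNReal.toReal_eq_one_iff _ |>.1 ?_
      rw [ENNReal.toReal_sum (fun k _ => measure_ne_top ℙ _)]
      have h1 : ∑ k ∈ Finset.range (m+1), (ℙ (A k)).toReal
          = ∑ k ∈ Finset.range (m+1), G k m :=
        Finset.sum_congr rfl fun k hk => hAval k (by
          have := Finset.mem_range.1 hk; omega)
      rw [h1, hG, ← integral_finset_sum _ (fun k _ => hInt k m)]
      have h2 : ∀ ω, ∑ k ∈ Finset.range (m+1),
          (m.choose k : ℝ) * V ω ^ k * (1 - V ω) ^ (m - k) = 1 :=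
        fun ω => aux_binom_sum (V ω) m
      rw [show (fun ω => ∑ k ∈ Finset.range (m+1),
          (m.choose k : ℝ) * V ω ^ k * (1 - V ω) ^ (m - k)) = fun _ => (1:ℝ) from
        funext h2]
      simp
    have hN : ℙ ((⋃ k ∈ Finset.range (m+1), A k)ᶜ) = 0 :=
      (prob_compl_eq_zero_iff
        ((Finset.range (m+1)).measurableSet_biUnion (fun k _ => hAmeas k))).2 hUall
    set bad : Finset ℕ :=
      (Finset.range (m+1)).filter (fun k => k + s₁ ≤ l ∨ k + s₁ = n) with hbad
    have hsubset : {ω | I n ω ≤ l ∨ I n ω = n} ⊆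
        (⋃ k ∈ bad, A k) ∪ (⋃ k ∈ Finset.range (m+1), A k)ᶜ := by
      intro ω hω
      by_cases hU' : ω ∈ ⋃ k ∈ Finset.range (m+1), A k
      · left
        simp only [Set.mem_iUnion, exists_prop] at hU'
        obtain ⟨k, hk, hAk⟩ := hU'
        have hIk : I n ω = k + s₁ := hAk
        have hω' : I n ω ≤ l ∨ I n ω = n := hω
        have hmem : k ∈ bad := by
          rw [hbad, Finset.mem_filter]
          exact ⟨hk, by omega⟩
        exact Set.mem_iUnion.2 ⟨k, Set.mem_iUnion.2 ⟨hmem, hAk⟩⟩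
      · exact Or.inr hU'
    have hle1 : ℙ {ω | I n ω ≤ l ∨ I n ω = n} ≤ ∑ k ∈ bad, ℙ (A k) := by
      calc ℙ {ω | I n ω ≤ l ∨ I n ω = n}
          ≤ ℙ ((⋃ k ∈ bad, A k) ∪ (⋃ k ∈ Finset.range (m+1), A k)ᶜ) := measure_mono hsubset
        _ ≤ ℙ (⋃ k ∈ bad, A k) + ℙ ((⋃ k ∈ Finset.range (m+1), A k)ᶜ) := measure_union_le _ _
        _ = ℙ (⋃ k ∈ bad, A k) := by rw [hN, add_zero]
        _ ≤ ∑ k ∈ bad, ℙ (A k) := measure_biUnion_finset_le _ _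
    have hle2 : (ℙ {ω | I n ω ≤ l ∨ I n ω = n}).toReal ≤ ∑ k ∈ bad, G k m := by
      have hne : ∑ k ∈ bad, ℙ (A k) ≠ ⊤ :=
        (ENNReal.sum_lt_top.2 fun k _ => measure_lt_top ℙ _).ne
      calc (ℙ {ω | I n ω ≤ l ∨ I n ω = n}).toReal
          ≤ (∑ k ∈ bad, ℙ (A k)).toReal := ENNReal.toReal_mono hne hle1
        _ = ∑ k ∈ bad, (ℙ (A k)).toReal := ENNReal.toReal_sum (fun k _ => measure_ne_top ℙ _)
        _ = ∑ k ∈ bad, G k m := Finset.sum_congr rfl fun k hk => hAval k (by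
            rw [hbad, Finset.mem_filter, Finset.mem_range] at hk; omega)
    have hbadsub : bad ⊆ insert m (Finset.range (l+1)) := by
      intro k hk
      rw [hbad, Finset.mem_filter, Finset.mem_range] at hk
      obtain ⟨hkm, hcond⟩ := hk
      rcases hcond with h | h
      · exact Finset.mem_insert_of_mem (Finset.mem_range.2 (by omega))
      · -- k + s₁ = n forces k = m
        have hs : s₁ ≤ s₀ + b * s₁ := by
          have : s₁ ≤ b * s₁ := Nat.le_mul_of_pos_left s₁ (by omega)
          omega
        have hge : m ≤ k := by
          rw [hm, Nat.sub_sub]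
          have h2 : n - (s₀ + b * s₁) ≤ n - s₁ := Nat.sub_le_sub_left hs n
          omega
        have hkm2 : k = m := by omega
        rw [hkm2]
        exact Finset.mem_insert_self m _
    calc (ℙ {ω | I n ω ≤ l ∨ I n ω = n}).toReal
        ≤ ∑ k ∈ bad, G k m := hle2
      _ ≤ ∑ k ∈ insert m (Finset.range (l+1)), G k m :=
          Finset.sum_le_sum_of_subset_of_nonneg hbadsub (fun k _ _ => hGnonneg k m)
      _ ≤ G m m + ∑ k ∈ Finset.range (l+1), G k m :=
          aux_sum_insert_le (fun k => hGnonneg k m) m _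
      _ = B n := by rw [hB, hm]; ring
  -- conclude
  have hto : Tendsto (fun n => (ℙ {ω | I n ω ≤ l ∨ I n ω = n}).toReal) atTop (𝓝 0) := by
    apply squeeze_zero' (Eventually.of_forall fun n => ENNReal.toReal_nonneg) _ hBtendsto
    filter_upwards [eventually_ge_atTop (s₀ + b * s₁)] with n hn using hkey n hn
  have := ENNReal.tendsto_ofReal hto
  rw [ENNReal.ofReal_zero] at this
  exact this.congr fun n => ENNReal.ofReal_toReal (measure_ne_top ℙ _)
end
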